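/- Let h ≥ 0 be a differentiable, non-increasing function on [0, ∞). Then for every nonnegative integer N, ∫₀^{2^N} min(s^{-1/2}, 1) · (-h'(s))^{1/2} ds ≤ h(0)^{1/2} · (N+1)^{1/2}. -/

import Mathlib

open Real Set MeasureTheory

/-- Paper Lemma 4.2: if `h ≥ 0` is differentiable and non-increasing on `[0, ∞)` then for
every `N ∈ ℕ`, `∫₀^{2^N} min(s^{-1/2}, 1) √(-h'(s)) ds ≤ √(h 0) · √(N+1)`. -/
theorem integral_sqrt_neg_deriv_bound
    (h h' : ℝ → ℝ)
    (hderiv : ∀ s ∈ Ici (0 : ℝ), HasDerivAt h (h' s) s)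
    (hpos : ∀ s ∈ Ici (0 : ℝ), 0 ≤ h s)
    (hmono : ∀ s ∈ Ici (0 : ℝ), h' s ≤ 0)
    (N : ℕ) :
    ∫ s in (0 : ℝ)..(2 ^ N : ℝ),
        min (s ^ (-(1 : ℝ)/2)) 1 * Real.sqrt (-h' s)
      ≤ Real.sqrt (h 0) * Real.sqrt (N + 1) := by
  set T : ℝ := (2 : ℝ) ^ N with hTdef
  have hT1 : (1 : ℝ) ≤ T := one_le_pow₀ (by norm_num)
  have hT0 : (0 : ℝ) < T := lt_of_lt_of_le one_pos hT1
  set f : ℝ → ℝ := fun s => min (s ^ (-(1 : ℝ)/2)) 1 with hf_def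
  set g : ℝ → ℝ := fun s => Real.sqrt (-h' s) with hg_def
  set μ : Measure ℝ := volume.restrict (Ioc 0 T) with hμ_def
  haveI : IsFiniteMeasure μ := ⟨by
    rw [hμ_def, Measure.restrict_apply_univ]
    exact measure_Ioc_lt_top⟩
  have hae : ∀ᵐ s ∂μ, s ∈ Ioc 0 T := ae_restrict_mem measurableSet_Ioc
  -- integrability of -h' on (0, T]
  have hcont : ContinuousOn (fun s => -(h s)) (Icc 0 T) := fun s hs =>
    ((hderiv s hs.1).continuousAt.neg).continuousWithinAt
  have hint' : IntegrableOn (fun s => -h' s) (Ioc 0 T) :=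
    intervalIntegral.integrableOn_deriv_of_nonneg hcont
      (fun x hx => (hderiv x hx.1.le).neg)
      (fun x hx => by simpa using hmono x hx.1.le)
  have hint : IntervalIntegrable (fun s => -h' s) volume 0 T :=
    (intervalIntegrable_iff_integrableOn_Ioc_of_le hT0.le).2 hint'
  -- fundamental theorem of calculus
  have hFTC : ∫ s in (0 : ℝ)..T, -h' s = h 0 - h T := by
    have := intervalIntegral.integral_eq_sub_of_hasDerivAt
      (f := fun s => -(h s)) (f' := fun s => -h' s)
      (fun x hx => by
        rw [uIcc_of_le hT0.le] at hx
        exact (hderiv x hx.1).neg) hint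
    rw [this]; ring
  -- Hölder data
  have hpq : Real.HolderConjugate 2 2 := ⟨by norm_num, by norm_num, by norm_num⟩
  have hfcont : ContinuousOn f (Ioc 0 T) := by
    intro s hs
    have hca : ContinuousAt f s :=
      Filter.Tendsto.min (Real.continuousAt_rpow_const s _ (Or.inl hs.1.ne'))
        continuousAt_const
    exact hca.continuousWithinAt
  have hfmeas : AEStronglyMeasurable f μ := hfcont.aestronglyMeasurable measurableSet_Ioc
  have hf_nonneg : 0 ≤ᵐ[μ] f := hae.mono fun s hs => by
    simp only [hf_def]
    exact le_min (Real.rpow_nonneg hs.1.le _) zero_le_one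
  have hfmem : MemLp f (ENNReal.ofReal 2) μ := by
    refine MemLp.of_bound hfmeas 1 (hae.mono fun s hs => ?_)
    rw [Real.norm_eq_abs, abs_of_nonneg (le_min (Real.rpow_nonneg hs.1.le _) zero_le_one)]
    exact min_le_right _ _
  have hmeasd : ∀ s ∈ Ici (0 : ℝ), deriv h s = h' s := fun s hs => (hderiv s hs).deriv
  have hgae : g =ᵐ[μ] fun s => Real.sqrt (-(deriv h s)) := hae.mono fun s hs => by
    simp only [hg_def, hmeasd s hs.1.le]
  have hgmeas : AEStronglyMeasurable g μ :=
    ((Real.continuous_sqrt.measurable.comp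
      (measurable_deriv h).neg).aestronglyMeasurable).congr hgae.symm
  have hg_nonneg : 0 ≤ᵐ[μ] g := Filter.Eventually.of_forall fun s => Real.sqrt_nonneg _
  have hgsq : ∀ᵐ s ∂μ, g s ^ 2 = -h' s := hae.mono fun s hs => by
    simp only [hg_def]
    rw [Real.sq_sqrt (neg_nonneg.2 (hmono s hs.1.le))]
  have hg2int : Integrable (fun s => g s ^ 2) μ :=
    hint'.congr (hgsq.mono fun s hs => hs.symm)
  have hgmem : MemLp g (ENNReal.ofReal 2) μ := by
    rw [show ENNReal.ofReal 2 = 2 by norm_num]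
    exact (memLp_two_iff_integrable_sq hgmeas).2 hg2int
  have holder := MeasureTheory.integral_mul_le_Lp_mul_Lq_of_nonneg hpq hf_nonneg hg_nonneg
    hfmem hgmem
  -- bound the second factor
  have hB_eq : ∫ a, g a ^ (2 : ℝ) ∂μ = h 0 - h T := by
    have : ∫ a, g a ^ (2 : ℝ) ∂μ = ∫ a, -h' a ∂μ := by
      refine integral_congr_ae (hgsq.mono fun s hs => ?_)
      show g s ^ (2:ℝ) = -h' s
      rw [Real.rpow_two, hs]
    rw [this, hμ_def, ← intervalIntegral.integral_of_le hT0.le, hFTC]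
  have hB_le : ∫ a, g a ^ (2 : ℝ) ∂μ ≤ h 0 := by
    rw [hB_eq]
    have := hpos T hT0.le
    linarith
  have hB_nonneg : 0 ≤ ∫ a, g a ^ (2 : ℝ) ∂μ :=
    integral_nonneg fun s => by rw [Real.rpow_two]; positivity
  -- bound the first factor
  have hA_nonneg : 0 ≤ ∫ a, f a ^ (2 : ℝ) ∂μ :=
    integral_nonneg fun s => by rw [Real.rpow_two]; positivity
  have hsplit : Ioc (0 : ℝ) 1 ∪ Ioc (1 : ℝ) T = Ioc 0 T := Ioc_union_Ioc_eq_Ioc zero_le_one hT1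
  have hEq1 : EqOn (fun s : ℝ => f s ^ (2 : ℝ)) (fun _ => (1 : ℝ)) (Ioc 0 1) := by
    intro s hs
    have h1 : (1 : ℝ) ≤ s ^ (-(1 : ℝ)/2) :=
      Real.one_le_rpow_of_pos_of_le_one_of_nonpos hs.1 hs.2 (by norm_num)
    simp only [hf_def, min_eq_right h1, Real.one_rpow]
  have hEq2 : EqOn (fun s : ℝ => f s ^ (2 : ℝ)) (fun s => s⁻¹) (Ioc 1 T) := by
    intro s hs
    have hs0 : (0 : ℝ) < s := lt_trans one_pos hs.1
    have h1 : s ^ (-(1 : ℝ)/2) ≤ 1 :=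
      Real.rpow_le_one_of_one_le_of_nonpos hs.1.le (by norm_num)
    simp only [hf_def, min_eq_left h1]
    rw [← Real.rpow_mul hs0.le]
    norm_num
    exact Real.rpow_neg_one s
  have hi1 : IntegrableOn (fun s : ℝ => f s ^ (2 : ℝ)) (Ioc 0 1) :=
    (integrableOn_const measure_Ioc_lt_top.ne).congr_fun hEq1.symm measurableSet_Ioc
  have hi2 : IntegrableOn (fun s : ℝ => f s ^ (2 : ℝ)) (Ioc 1 T) := by
    have : IntervalIntegrable (fun s : ℝ => s⁻¹) volume 1 T :=
      intervalIntegral.intervalIntegrable_inv (fun x hx => by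
        rw [uIcc_of_le hT1] at hx
        exact ne_of_gt (lt_of_lt_of_le one_pos hx.1)) (by fun_prop)
    exact ((intervalIntegrable_iff_integrableOn_Ioc_of_le hT1).1 this).congr_fun
      hEq2.symm measurableSet_Ioc
  have hA_eq : ∫ a, f a ^ (2 : ℝ) ∂μ = 1 + Real.log T := by
    rw [hμ_def, ← hsplit,
      setIntegral_union (Ioc_disjoint_Ioc_of_le le_rfl) measurableSet_Ioc hi1 hi2]
    have e1 : ∫ s in Ioc (0:ℝ) 1, f s ^ (2:ℝ) = 1 := by
      rw [setIntegral_congr_fun measurableSet_Ioc hEq1]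
      simp
    have e2 : ∫ s in Ioc (1:ℝ) T, f s ^ (2:ℝ) = Real.log T := by
      rw [setIntegral_congr_fun measurableSet_Ioc hEq2,
        ← intervalIntegral.integral_of_le hT1,
        integral_inv (by rw [uIcc_of_le hT1]; rintro ⟨h1, _⟩; linarith)]
      rw [div_one]
    rw [e1, e2]
  have hA_le : ∫ a, f a ^ (2 : ℝ) ∂μ ≤ (N : ℝ) + 1 := by
    rw [hA_eq, hTdef, Real.log_pow]
    have hlog : Real.log 2 ≤ 1 := by
      have := Real.log_le_sub_one_of_pos (by norm_num : (0:ℝ) < 2)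
      linarith
    have hN : (0:ℝ) ≤ (N:ℝ) := Nat.cast_nonneg N
    nlinarith
  -- assemble
  rw [intervalIntegral.integral_of_le hT0.le]
  refine le_trans holder ?_
  have h1 : (∫ a, f a ^ (2:ℝ) ∂μ) ^ (1/(2:ℝ)) ≤ ((N:ℝ) + 1) ^ (1/(2:ℝ)) :=
    Real.rpow_le_rpow hA_nonneg hA_le (by norm_num)
  have h2 : (∫ a, g a ^ (2:ℝ) ∂μ) ^ (1/(2:ℝ)) ≤ (h 0) ^ (1/(2:ℝ)) :=
    Real.rpow_le_rpow hB_nonneg hB_le (by norm_num)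
  calc (∫ a, f a ^ (2:ℝ) ∂μ) ^ (1/(2:ℝ)) * (∫ a, g a ^ (2:ℝ) ∂μ) ^ (1/(2:ℝ))
      ≤ ((N:ℝ) + 1) ^ (1/(2:ℝ)) * (h 0) ^ (1/(2:ℝ)) := by
        apply mul_le_mul h1 h2 (Real.rpow_nonneg hB_nonneg _)
          (Real.rpow_nonneg (by positivity) _)
    _ = Real.sqrt (h 0) * Real.sqrt ((N:ℝ) + 1) := by
        rw [Real.sqrt_eq_rpow, Real.sqrt_eq_rpow, mul_comm]
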